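/- Let (a_n), (b_n) be positive nonincreasing sequences and p > 0, d > 0 such that for all n ≥ 1 both sup_{k ≤ n} k^{1/p}·b_k ≤ d·sup_{k ≤ n} k^{1/p}·a_k and sup_{k ≤ n} k^{1/p}·a_k ≤ d·sup_{k ≤ n} k^{1/p}·b_k. Then for any regular sequence (α_n): (a_n ≍ α_n) if and only if (b_n ≍ α_n), where x_n ≍ y_n means there exist constants giving two-sided domination x_n ≤ c₁·y_n and y_n ≤ c₂·x_n for all n. -/

import Mathlib

/-- `supUpTo p a n = sup_{1 ≤ k ≤ n} k^(1/p) * a k`. -/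
noncomputable def supUpTo (p : ℝ) (a : ℕ → ℝ) (n : ℕ) : ℝ :=
  ⨆ k ∈ Finset.Icc 1 n, (k : ℝ) ^ (1 / p) * a k

/-- `x ≍ y`: two-sided domination (for `n ≥ 1`). -/
def Asymp (x y : ℕ → ℝ) : Prop :=
  ∃ c₁ c₂ : ℝ, 0 < c₁ ∧ 0 < c₂ ∧
    (∀ n, 1 ≤ n → x n ≤ c₁ * y n) ∧ (∀ n, 1 ≤ n → y n ≤ c₂ * x n)

lemma supUpTo_le {p : ℝ} {x : ℕ → ℝ} {n : ℕ} {B : ℝ} (hB : 0 ≤ B)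
    (h : ∀ k ∈ Finset.Icc 1 n, (k : ℝ) ^ (1 / p) * x k ≤ B) :
    supUpTo p x n ≤ B := by
  refine ciSup_le fun k => ?_
  by_cases hk : k ∈ Finset.Icc 1 n
  · haveI : Nonempty (k ∈ Finset.Icc 1 n) := ⟨hk⟩
    exact ciSup_le fun _ => h k hk
  · haveI : IsEmpty (k ∈ Finset.Icc 1 n) := ⟨hk⟩
    rw [Real.iSup_of_isEmpty]; exact hB

lemma le_supUpTo {p : ℝ} {x : ℕ → ℝ} {n k : ℕ}
    (hx : ∀ j ∈ Finset.Icc 1 n, 0 ≤ (j : ℝ) ^ (1 / p) * x j)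
    (hk : k ∈ Finset.Icc 1 n) :
    (k : ℝ) ^ (1 / p) * x k ≤ supUpTo p x n := by
  have hbdd : BddAbove (Set.range fun j =>
      ⨆ _ : j ∈ Finset.Icc 1 n, (j : ℝ) ^ (1 / p) * x j) := by
    refine ⟨∑ j ∈ Finset.Icc 1 n, (j : ℝ) ^ (1 / p) * x j, ?_⟩
    rintro y ⟨j, rfl⟩
    show (⨆ _ : j ∈ Finset.Icc 1 n, (j : ℝ) ^ (1 / p) * x j) ≤ _
    by_cases hj : j ∈ Finset.Icc 1 n
    · haveI : Nonempty (j ∈ Finset.Icc 1 n) := ⟨hj⟩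
      rw [ciSup_const]
      exact Finset.single_le_sum hx hj
    · haveI : IsEmpty (j ∈ Finset.Icc 1 n) := ⟨hj⟩
      rw [Real.iSup_of_isEmpty]
      exact Finset.sum_nonneg hx
  have h1 : (⨆ _ : k ∈ Finset.Icc 1 n, (k : ℝ) ^ (1 / p) * x k) ≤ supUpTo p x n :=
    le_ciSup hbdd k
  haveI : Nonempty (k ∈ Finset.Icc 1 n) := ⟨hk⟩
  rwa [ciSup_const] at h1

/-- The one-directional transfer: if `a ≍ α` then `b ≍ α`. -/
lemma carl_trick_aux (a b α : ℕ → ℝ) (p d c : ℝ)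
    (ha : ∀ n, 1 ≤ n → 0 < a n) (hb : ∀ n, 1 ≤ n → 0 < b n)
    (hbmono : ∀ m n : ℕ, 1 ≤ m → m ≤ n → b n ≤ b m)
    (hp : 0 < p) (hd : 0 < d)
    (hsup1 : ∀ n : ℕ, 1 ≤ n → supUpTo p b n ≤ d * supUpTo p a n)
    (hsup2 : ∀ n : ℕ, 1 ≤ n → supUpTo p a n ≤ d * supUpTo p b n)
    (hα : ∀ n, 1 ≤ n → 0 < α n) (hc : 0 < c)
    (hreg2 : ∀ m n : ℕ, 1 ≤ m → m ≤ n → α m ≤ c * α n) :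
    Asymp a α → Asymp b α := by
  rintro ⟨c₁, c₂, hc₁, hc₂, h1, h2⟩
  have hp' : (0:ℝ) ≤ 1 / p := by positivity
  -- nonnegativity of terms
  have haterm : ∀ n : ℕ, ∀ j ∈ Finset.Icc 1 n, 0 ≤ (j : ℝ) ^ (1 / p) * a j := by
    intro n j hj
    have hj1 : 1 ≤ j := (Finset.mem_Icc.mp hj).1
    have := ha j hj1
    positivity
  have hbterm : ∀ n : ℕ, ∀ j ∈ Finset.Icc 1 n, 0 ≤ (j : ℝ) ^ (1 / p) * b j := by
    intro n j hj
    have hj1 : 1 ≤ j := (Finset.mem_Icc.mp hj).1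
    have := hb j hj1
    positivity
  -- Lemma A : supUpTo p a n ≤ c₁ * c * (n^{1/p} * α n)
  have hLA : ∀ n : ℕ, 1 ≤ n →
      supUpTo p a n ≤ c₁ * c * ((n : ℝ) ^ (1 / p) * α n) := by
    intro n hn
    have hαn := hα n hn
    have hnp : (0:ℝ) ≤ (n : ℝ) ^ (1 / p) := by positivity
    refine supUpTo_le (by positivity) ?_
    intro k hk
    obtain ⟨hk1, hkn⟩ := Finset.mem_Icc.mp hk
    have hak : a k ≤ c₁ * (c * α n) := by
      have t1 : a k ≤ c₁ * α k := h1 k hk1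
      have t2 : α k ≤ c * α n := hreg2 k n hk1 hkn
      nlinarith
    have hkp : (k : ℝ) ^ (1 / p) ≤ (n : ℝ) ^ (1 / p) :=
      Real.rpow_le_rpow (by positivity) (by exact_mod_cast hkn) hp'
    have := mul_le_mul hkp hak (ha k hk1).le hnp
    nlinarith
  -- Upper bound : b n ≤ (d * (c₁ * c)) * α n
  have hupper : ∀ n : ℕ, 1 ≤ n → b n ≤ d * (c₁ * c) * α n := by
    intro n hn
    have hnmem : n ∈ Finset.Icc 1 n := Finset.mem_Icc.mpr ⟨hn, le_refl n⟩
    have ht : (0:ℝ) < (n : ℝ) ^ (1 / p) := by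
      have : (0:ℝ) < (n : ℝ) := by exact_mod_cast hn
      positivity
    have s1 : (n : ℝ) ^ (1 / p) * b n ≤ supUpTo p b n := le_supUpTo (hbterm n) hnmem
    have s2 : supUpTo p b n ≤ d * supUpTo p a n := hsup1 n hn
    have s3 : supUpTo p a n ≤ c₁ * c * ((n : ℝ) ^ (1 / p) * α n) := hLA n hn
    have s4 : (n : ℝ) ^ (1 / p) * b n ≤ (n : ℝ) ^ (1 / p) * (d * (c₁ * c) * α n) := by
      nlinarith
    exact le_of_mul_le_mul_left s4 ht
  -- constants
  have hMpos : (0:ℝ) < c * c₂ * d * (d * (c₁ * c)) := by positivity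
  obtain ⟨j, hj⟩ := pow_unbounded_of_one_lt ((c * c₂ * d * (d * (c₁ * c))) ^ p)
    (by norm_num : (1:ℝ) < 2)
  obtain ⟨M, hM⟩ : ∃ M : ℝ, M = c * c₂ * d * (d * (c₁ * c)) := ⟨_, rfl⟩
  obtain ⟨Q, hQ⟩ : ∃ Q : ℝ, Q = ((2:ℝ) ^ j) ^ (1 / p) := ⟨_, rfl⟩
  rw [← hM] at hj hMpos
  have hQM : M < Q := by
    have h0 : (0:ℝ) ≤ M ^ p := by positivity
    have h2' := Real.rpow_lt_rpow h0 hj (by positivity : (0:ℝ) < 1 / p)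
    have h3 : (M ^ p) ^ (1 / p) = M := by
      rw [one_div, Real.rpow_rpow_inv hMpos.le hp.ne']
    rw [hQ, ← h3]; exact h2'
  have hQpos : 0 < Q := lt_trans hMpos hQM
  obtain ⟨S, hS⟩ : ∃ S : ℝ, S = c * c₂ * d := ⟨_, rfl⟩
  have hSpos : 0 < S := by rw [hS]; positivity
  have hCpos : 0 < S * Q / (Q - M) := div_pos (mul_pos hSpos hQpos) (by linarith)
  refine ⟨d * (c₁ * c), S * Q / (Q - M), by positivity, hCpos, hupper, ?_⟩
  intro n hn
  obtain ⟨N, hN⟩ : ∃ N : ℕ, N = 2 ^ j * n := ⟨_, rfl⟩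
  have hnN : n ≤ N := by
    rw [hN]
    exact Nat.le_mul_of_pos_left n (by positivity)
  have hN1 : 1 ≤ N := le_trans hn hnN
  have hnpos : (0:ℝ) < (n : ℝ) := by exact_mod_cast hn
  obtain ⟨t, htdef⟩ : ∃ t : ℝ, t = (n : ℝ) ^ (1 / p) := ⟨_, rfl⟩
  have ht : (0:ℝ) < t := by rw [htdef]; positivity
  have hTQ : ((N : ℝ)) ^ (1 / p) = Q * t := by
    have hcast : ((N : ℕ) : ℝ) = (2:ℝ) ^ j * (n : ℝ) := by
      rw [hN]; push_cast; ring
    rw [hcast, Real.mul_rpow (by positivity) hnpos.le, hQ, htdef]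
  have hαn := hα n hn
  have hbn := hb n hn
  -- (A) : Q * t * α n ≤ c * c₂ * supUpTo p a N
  have hA : Q * t * α n ≤ c * c₂ * supUpTo p a N := by
    have haN := ha N hN1
    have e1 : α n ≤ c * α N := hreg2 n N hn hnN
    have e2 : α N ≤ c₂ * a N := h2 N hN1
    have e3 : (N : ℝ) ^ (1 / p) * a N ≤ supUpTo p a N :=
      le_supUpTo (haterm N) (Finset.mem_Icc.mpr ⟨hN1, le_refl N⟩)
    rw [hTQ] at e3
    have e4 : α n ≤ c * c₂ * a N := by nlinarith
    have hQt : (0:ℝ) ≤ Q * t := le_of_lt (mul_pos hQpos ht)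
    have e5 : Q * t * α n ≤ Q * t * (c * c₂ * a N) :=
      mul_le_mul_of_nonneg_left e4 hQt
    have e6 : c * c₂ * (Q * t * a N) ≤ c * c₂ * supUpTo p a N :=
      mul_le_mul_of_nonneg_left e3 (by positivity)
    nlinarith
  -- (C) : supUpTo p b N ≤ supUpTo p b n + (Q*t) * b n
  have hsupbn0 : 0 ≤ supUpTo p b n :=
    le_trans (le_of_lt (mul_pos (by rw [htdef] at ht; exact ht) hbn))
      (le_supUpTo (hbterm n) (Finset.mem_Icc.mpr ⟨hn, le_refl n⟩))
  have hQtb : (0:ℝ) ≤ Q * t * b n := le_of_lt (mul_pos (mul_pos hQpos ht) hbn)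
  have hCN : supUpTo p b N ≤ supUpTo p b n + Q * t * b n := by
    refine supUpTo_le (by linarith) ?_
    intro k hk
    obtain ⟨hk1, hkN⟩ := Finset.mem_Icc.mp hk
    by_cases hkn : k ≤ n
    · have := le_supUpTo (hbterm n) (Finset.mem_Icc.mpr ⟨hk1, hkn⟩)
      linarith
    · push_neg at hkn
      have hb1 : b k ≤ b n := hbmono n k hn hkn.le
      have hk2 : (k : ℝ) ^ (1 / p) ≤ (N : ℝ) ^ (1 / p) :=
        Real.rpow_le_rpow (by positivity) (by exact_mod_cast hkN) hp'
      rw [hTQ] at hk2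
      have hbk := hb k hk1
      have hkp0 : (0:ℝ) ≤ (k : ℝ) ^ (1 / p) := by positivity
      have : (k : ℝ) ^ (1 / p) * b k ≤ Q * t * b n := by nlinarith
      linarith
  -- combine everything
  have hBB : supUpTo p a N ≤ d * supUpTo p b N := hsup2 N hN1
  have hD : supUpTo p b n ≤ d * (c₁ * c * (t * α n)) := by
    have u1 := hLA n hn
    have u2 := hsup1 n hn
    rw [← htdef] at u1
    have u3 := mul_le_mul_of_nonneg_left u1 hd.le
    linarith
  have main : Q * t * α n ≤ M * (t * α n) + S * (Q * t) * b n := by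
    have hccd : (0:ℝ) ≤ c * c₂ * d := by positivity
    have k1 : c * c₂ * supUpTo p a N ≤ c * c₂ * (d * supUpTo p b N) :=
      mul_le_mul_of_nonneg_left hBB (by positivity)
    have k2 : c * c₂ * d * supUpTo p b N ≤
        c * c₂ * d * (supUpTo p b n + Q * t * b n) :=
      mul_le_mul_of_nonneg_left hCN hccd
    have k3 : c * c₂ * d * supUpTo p b n ≤
        c * c₂ * d * (d * (c₁ * c * (t * α n))) :=
      mul_le_mul_of_nonneg_left hD hccd
    have k4 : M * (t * α n) = c * c₂ * d * (d * (c₁ * c * (t * α n))) := by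
      rw [hM]; ring
    have k5 : S * (Q * t) * b n = c * c₂ * d * (Q * t * b n) := by
      rw [hS]; ring
    linarith [hA, k1, k2, k3, k4, k5]
  -- divide by t and rearrange
  have main2 : α n * (Q - M) ≤ S * Q * b n := by
    have h' : t * (α n * (Q - M)) ≤ t * (S * Q * b n) := by linarith [main]
    exact le_of_mul_le_mul_left h' ht
  rw [div_mul_eq_mul_div, le_div_iff₀ (by linarith : (0:ℝ) < Q - M)]
  exact main2

/-- if the weighted sups of two positive nonincreasing sequences dominate
each other, then `a_n ≍ α_n ↔ b_n ≍ α_n` for every regular sequence `α`. -/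
theorem two_sided_carl_trick (a b α : ℕ → ℝ) (p d c : ℝ)
    (ha : ∀ n, 1 ≤ n → 0 < a n) (hb : ∀ n, 1 ≤ n → 0 < b n)
    (hamono : ∀ m n : ℕ, 1 ≤ m → m ≤ n → a n ≤ a m)
    (hbmono : ∀ m n : ℕ, 1 ≤ m → m ≤ n → b n ≤ b m)
    (hp : 0 < p) (hd : 0 < d)
    (hsup1 : ∀ n : ℕ, 1 ≤ n → supUpTo p b n ≤ d * supUpTo p a n)
    (hsup2 : ∀ n : ℕ, 1 ≤ n → supUpTo p a n ≤ d * supUpTo p b n)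
    (hα : ∀ n, 1 ≤ n → 0 < α n) (hc : 0 < c)
    (hreg1 : ∀ n : ℕ, 1 ≤ n → α n ≤ c * α (2 * n))
    (hreg2 : ∀ m n : ℕ, 1 ≤ m → m ≤ n → α m ≤ c * α n) :
    (Asymp a α ↔ Asymp b α) :=
  ⟨carl_trick_aux a b α p d c ha hb hbmono hp hd hsup1 hsup2 hα hc hreg2,
   carl_trick_aux b a α p d c hb ha hamono hp hd hsup2 hsup1 hα hc hreg2⟩
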